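/- arXiv:1402.1970 — 2 statements merged into one kernel-verified Lean document; each statement's English description precedes it below -/
import Mathlib

section
/- Spikes (liminf) in Eratosthenes sieve: for every real ε > 0 and every K there exist k ≥ K and three consecutive integers a < b < c coprime to p_k# (with no integer strictly between a and b, nor between b and c, coprime to p_k#) such that (c − b) < ε·(b − a); that is, the lim inf over the stages of the sieve of the ratio of a pair of consecutive gaps is 0. -/
/-- `nthPrime k` is the `k`-th prime, with `nthPrime 1 = 2`. -/
noncomputable def nthPrime (k : ℕ) : ℕ := Nat.nth Nat.Prime (k - 1)

private lemma prime_dvd_primorial_iff {q n : ℕ} (hq : q.Prime) :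
    q ∣ primorial n ↔ q ≤ n := by
  unfold primorial
  rw [hq.prime.dvd_finset_prod_iff]
  constructor
  · rintro ⟨a, ha, hdvd⟩
    simp only [Finset.mem_filter, Finset.mem_range] at ha
    have := (Nat.prime_dvd_prime_iff_eq hq ha.2).mp hdvd
    omega
  · intro h
    exact ⟨q, by simp [Finset.mem_filter, Nat.lt_succ_iff, h, hq], dvd_refl q⟩

private lemma gcd_sub_self {m P : ℕ} (h : m ≤ P) :
    Nat.gcd (P - m) P = Nat.gcd m P := by
  apply Nat.dvd_antisymm <;> apply Nat.dvd_gcd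
  · have h1 : Nat.gcd (P - m) P ∣ P - m := Nat.gcd_dvd_left _ _
    have h2 : Nat.gcd (P - m) P ∣ P := Nat.gcd_dvd_right _ _
    have h3 : Nat.gcd (P - m) P ∣ P - (P - m) := Nat.dvd_sub h2 h1
    have : P - (P - m) = m := by omega
    rwa [this] at h3
  · exact Nat.gcd_dvd_right _ _
  · exact Nat.dvd_sub (Nat.gcd_dvd_right _ _) (Nat.gcd_dvd_left _ _)
  · exact Nat.gcd_dvd_right _ _

theorem stmt_17 (ε : ℝ) (hε : 0 < ε) (K : ℕ) :
    ∃ k ≥ K, ∃ a b c : ℕ, a < b ∧ b < c ∧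
      Nat.gcd a (primorial (nthPrime k)) = 1 ∧
      Nat.gcd b (primorial (nthPrime k)) = 1 ∧
      Nat.gcd c (primorial (nthPrime k)) = 1 ∧
      (∀ x : ℕ, a < x → x < b → Nat.gcd x (primorial (nthPrime k)) ≠ 1) ∧
      (∀ x : ℕ, b < x → x < c → Nat.gcd x (primorial (nthPrime k)) ≠ 1) ∧
      ((c : ℝ) - (b : ℝ)) < ε * ((b : ℝ) - (a : ℝ)) := by
  have hinf : (setOf Nat.Prime).Infinite := Nat.infinite_setOf_prime
  set k : ℕ := max (max K 2) (⌈2 / ε⌉₊ + 2) with hk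
  have hkK : K ≤ k := le_trans (le_max_left _ _) (le_max_left _ _)
  have hk2 : 2 ≤ k := le_trans (le_max_right _ _) (le_max_left _ _)
  have hkN : ⌈2 / ε⌉₊ + 2 ≤ k := le_max_right _ _
  set i : ℕ := k - 1 with hi
  have hik : nthPrime k = Nat.nth Nat.Prime i := rfl
  set p : ℕ := Nat.nth Nat.Prime i with hp
  set p' : ℕ := Nat.nth Nat.Prime (i + 1) with hp'
  have hpp : p.Prime := Nat.nth_mem_of_infinite hinf i
  have hpp' : p'.Prime := Nat.nth_mem_of_infinite hinf (i + 1)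
  set P : ℕ := primorial p with hP
  -- all primes ≤ p divide P, and all prime divisors of P are ≤ p
  have hpltp' : p < p' := Nat.nth_lt_nth' (Nat.lt_succ_self i) (fun hf => absurd hf hinf)
  -- 2 ∣ P and p ∣ P
  have h2p : 2 ≤ p := hpp.two_le
  have h2P : 2 ∣ P := (prime_dvd_primorial_iff Nat.prime_two).mpr h2p
  have hpP : p ∣ P := (prime_dvd_primorial_iff hpp).mpr le_rfl
  have hPpos : 0 < P := primorial_pos p
  -- P ≥ 2 * p  (when p > 2) or P = 2 (p = 2); since k ≥ 2, i ≥ 1, p ≥ 3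
  have hi1 : 1 ≤ i := by omega
  have hp3 : 3 ≤ p := by
    have h2 : Nat.nth Nat.Prime 0 = 2 := Nat.nth_prime_zero_eq_two
    have : Nat.nth Nat.Prime 0 < Nat.nth Nat.Prime i :=
      Nat.nth_lt_nth' (by omega) (fun hf => absurd hf hinf)
    omega
  have h2pP : 2 * p ≤ P := by
    have hcop : Nat.Coprime 2 p := (Nat.coprime_primes Nat.prime_two hpp).mpr (by omega)
    exact Nat.le_of_dvd hPpos (hcop.mul_dvd_of_dvd_of_dvd h2P hpP)
  -- Bertrand: p' ≤ 2 * p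
  have hp'le : p' ≤ 2 * p := by
    obtain ⟨q, hq, hpq, hq2p⟩ := Nat.exists_prime_lt_and_le_two_mul p (by omega)
    have hle : p' ≤ q := by
      by_contra h
      push_neg at h
      have := Nat.le_nth_of_lt_nth_succ h hq
      omega
    omega
  have hp'P : p' < P := by
    rcases lt_or_eq_of_le (le_trans hp'le h2pP) with h | h
    · exact h
    · exfalso
      have : p' ∣ P := h ▸ dvd_refl p'
      have := (prime_dvd_primorial_iff hpp').mp this
      omega
  -- choose a, b, c
  refine ⟨k, hkK, P - p', P - 1, P + 1, ?_, ?_, ?_, ?_, ?_, ?_, ?_, ?_⟩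
  · omega
  · omega
  · show Nat.gcd _ P = 1
    rw [gcd_sub_self (le_of_lt hp'P)]
    exact (Nat.Prime.coprime_iff_not_dvd hpp').mpr
      (fun h => by have := (prime_dvd_primorial_iff hpp').mp h; omega)
  · show Nat.gcd _ P = 1
    rw [gcd_sub_self (by omega)]
    exact Nat.gcd_one_left P
  · show Nat.gcd (P+1) P = 1
    have : Nat.gcd (P + 1) P = Nat.gcd 1 P := by
      rw [Nat.add_comm, Nat.gcd_add_self_left]
    rw [this]; exact Nat.gcd_one_left P
  · intro x hax hxb
    show Nat.gcd x P ≠ 1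
    set m : ℕ := P - x with hm
    have hxP : x = P - m := by omega
    have hm2 : 2 ≤ m := by omega
    have hmp' : m < p' := by omega
    rw [hxP, gcd_sub_self (by omega)]
    intro hcon
    have hmf : (Nat.minFac m).Prime := Nat.minFac_prime (by omega)
    have hmfm : Nat.minFac m ∣ m := Nat.minFac_dvd m
    have hmfle : Nat.minFac m ≤ p := by
      have h1 : Nat.minFac m ≤ m := Nat.minFac_le (by omega)
      have h2 : Nat.minFac m < p' := by omega
      exact Nat.le_nth_of_lt_nth_succ h2 hmf
    have hmfP : Nat.minFac m ∣ P := (prime_dvd_primorial_iff hmf).mpr hmfle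
    have : Nat.minFac m ∣ Nat.gcd m P := Nat.dvd_gcd hmfm hmfP
    rw [hcon] at this
    have := Nat.le_of_dvd one_pos this
    have := hmf.two_le
    omega
  · intro x hbx hxc
    have hxP : x = P := by omega
    show Nat.gcd x P ≠ 1
    rw [hxP, Nat.gcd_self]
    omega
  · -- (P+1) - (P-1) = 2 < ε * ((P-1) - (P-p')) = ε * (p'-1)
    have hc1 : ((P + 1 : ℕ) : ℝ) = (P : ℝ) + 1 := by push_cast; ring
    have hc2 : ((P - 1 : ℕ) : ℝ) = (P : ℝ) - 1 := by
      rw [Nat.cast_sub (by omega)]; norm_num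
    have hc3 : ((P - p' : ℕ) : ℝ) = (P : ℝ) - (p' : ℝ) := by
      rw [Nat.cast_sub (le_of_lt hp'P)]
    rw [hc1, hc2, hc3]
    have hsimp : (P : ℝ) + 1 - ((P : ℝ) - 1) = 2 := by ring
    have hsimp2 : (P : ℝ) - 1 - ((P : ℝ) - (p' : ℝ)) = (p' : ℝ) - 1 := by ring
    rw [hsimp, hsimp2]
    -- p' ≥ i + 1 = k ≥ ⌈2/ε⌉ + 2
    have hp'ge : (i + 1 : ℕ) ≤ p' := (Nat.nth_strictMono hinf).le_apply
    have hkp' : (⌈2 / ε⌉₊ + 2 : ℕ) ≤ p' := by omega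
    have h1 : (2 / ε : ℝ) ≤ ⌈2 / ε⌉₊ := Nat.le_ceil _
    have h2 : ((⌈2 / ε⌉₊ + 2 : ℕ) : ℝ) ≤ (p' : ℝ) := by exact_mod_cast hkp'
    have h3 : 2 / ε < (p' : ℝ) - 1 := by push_cast at h2 ⊢; linarith
    calc (2 : ℝ) = ε * (2 / ε) := by field_simp
    _ < ε * ((p' : ℝ) - 1) := by
        exact mul_lt_mul_of_pos_left h3 hε
end

section
/- Spikes (limsup) in Eratosthenes sieve: for every real M > 0 and every K there exist k ≥ K and three consecutive integers a < b < c coprime to p_k# (with no integer strictly between a and b, nor between b and c, coprime to p_k#) such that (c − b) > M·(b − a); that is, the lim sup over the stages of the sieve of the ratio of a pair of consecutive gaps is ∞. -/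
lemma dvd_primorial_of_prime {r n : ℕ} (hr : r.Prime) (h : r ≤ n) : r ∣ primorial n := by
  apply Finset.dvd_prod_of_mem
  simp [Finset.mem_filter, Finset.mem_range, Nat.lt_succ_iff, h, hr]

lemma le_of_prime_dvd_primorial {r n : ℕ} (hr : r.Prime) (h : r ∣ primorial n) : r ≤ n := by
  obtain ⟨s, hs, hrs⟩ := hr.prime.exists_mem_finset_dvd h
  simp only [Finset.mem_filter, Finset.mem_range, Nat.lt_succ_iff] at hs
  exact ((Nat.prime_dvd_prime_iff_eq hr hs.2).1 hrs) ▸ hs.1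

theorem stmt_18 (M : ℝ) (hM : 0 < M) (K : ℕ) :
    ∃ k ≥ K, ∃ a b c : ℕ, a < b ∧ b < c ∧
      Nat.gcd a (primorial (nthPrime k)) = 1 ∧
      Nat.gcd b (primorial (nthPrime k)) = 1 ∧
      Nat.gcd c (primorial (nthPrime k)) = 1 ∧
      (∀ x : ℕ, a < x → x < b → Nat.gcd x (primorial (nthPrime k)) ≠ 1) ∧
      (∀ x : ℕ, b < x → x < c → Nat.gcd x (primorial (nthPrime k)) ≠ 1) ∧
      ((c : ℝ) - (b : ℝ)) > M * ((b : ℝ) - (a : ℝ)) := by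
  -- choose a big prime r with r > 2M + 1
  obtain ⟨m, hm⟩ := exists_nat_gt (2 * M + 1)
  obtain ⟨r, hrm, hr⟩ := Nat.exists_infinite_primes m
  set k := max K (Nat.count Nat.Prime r + 1) with hk
  refine ⟨k, le_max_left _ _, ?_⟩
  have hpinf := Nat.infinite_setOf_prime
  set p := nthPrime k with hp
  have hrp : r ≤ p := by
    have h1 : Nat.count Nat.Prime r ≤ k - 1 := by omega
    calc r = Nat.nth Nat.Prime (Nat.count Nat.Prime r) := (Nat.nth_count hr).symm
    _ ≤ Nat.nth Nat.Prime (k - 1) := Nat.nth_monotone hpinf h1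
  have hpp : p.Prime := Nat.nth_mem_of_infinite hpinf _
  set P := primorial p with hP
  have h2P : 2 ∣ P := dvd_primorial_of_prime Nat.prime_two (le_trans hpp.two_le le_rfl)
  have hP2 : 2 ≤ P := Nat.le_of_dvd (primorial_pos p) h2P
  -- next prime after p
  have hex : ∃ q, q.Prime ∧ p < q := by
    obtain ⟨q, hq1, hq2⟩ := Nat.exists_infinite_primes (p + 1); exact ⟨q, hq2, hq1⟩
  set q := Nat.find hex with hq
  obtain ⟨hqp, hpq⟩ := Nat.find_spec hex
  have hqmin : ∀ j, j < q → ¬(j.Prime ∧ p < j) := fun j hj => Nat.find_min hex hj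
  have hq2 : 2 ≤ q := hqp.two_le
  refine ⟨P - 1, P + 1, P + q, by omega, by omega, ?_, ?_, ?_, ?_, ?_, ?_⟩
  · have h1 : P = 1 + (P - 1) := by omega
    nth_rewrite 2 [h1]
    rw [Nat.gcd_add_self_right, Nat.gcd_one_right]
  · rw [Nat.add_comm, Nat.gcd_add_self_left, Nat.gcd_one_left]
  · rw [Nat.add_comm, Nat.gcd_add_self_left]
    refine (Nat.Prime.coprime_iff_not_dvd hqp).2 ?_
    intro hdvd
    exact absurd (le_of_prime_dvd_primorial hqp hdvd) (not_le.2 hpq)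
  · intro x h1 h2
    have hx : x = P := by omega
    subst hx
    rw [Nat.gcd_self]; omega
  · intro x h1 h2
    set j := x - P with hj
    have hxj : x = P + j := by omega
    have hj1 : 1 < j := by omega
    have hjq : j < q := by omega
    rw [hxj, Nat.add_comm, Nat.gcd_add_self_left]
    -- j has a prime factor ≤ p
    obtain ⟨s, hs, hsj⟩ := Nat.exists_prime_and_dvd (by omega : j ≠ 1)
    have hsp : s ≤ p := by
      by_contra hle
      exact hqmin s (lt_of_le_of_lt (Nat.le_of_dvd (by omega) hsj) hjq) ⟨hs, by omega⟩
    intro hco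
    have : s ∣ Nat.gcd j P :=
      Nat.dvd_gcd hsj (dvd_primorial_of_prime hs hsp)
    rw [hco] at this
    exact hs.one_lt.ne' (Nat.eq_one_of_dvd_one this ▸ rfl)
  · have hq2M : (q : ℝ) > 2 * M + 1 := by
      have : r ≤ q := le_trans hrp (le_of_lt hpq)
      calc (2 : ℝ) * M + 1 < m := hm
      _ ≤ r := by exact_mod_cast hrm
      _ ≤ q := by exact_mod_cast this
    have h1 : ((P + q : ℕ) : ℝ) - ((P + 1 : ℕ) : ℝ) = (q : ℝ) - 1 := by push_cast; ring
    have h2 : ((P + 1 : ℕ) : ℝ) - ((P - 1 : ℕ) : ℝ) = 2 := by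
      have : ((P - 1 : ℕ) : ℝ) = (P : ℝ) - 1 := by
        have : 1 ≤ P := by omega
        push_cast [this]; ring
      rw [this]; push_cast; ring
    rw [h1, h2]; linarith
end
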